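/- In the graph G of the previous construction (cliques minus matchings attached to an expander), if additionally every U ⊆ V(H) with |U| ≤ εd/3 satisfies e_H(U,Uᶜ) ≥ (1-ε)d₁|U|, then every U ⊆ V(G) with |U| ≤ εd/3 satisfies e_G(U, Uᶜ) ≥ (1-ε)d|U|. -/

import Mathlib

/-- The number of edges of `G` with one endpoint in `U` and the other outside `U`. -/
noncomputable def edgeBoundary {V : Type*} (G : SimpleGraph V) (U : Set V) : ℕ :=
  {p : V × V | p.1 ∈ U ∧ p.2 ∉ U ∧ G.Adj p.1 p.2}.ncard

/-- The graph `G` obtained from `H` by attaching to each vertex `v` of `H` a copy `F(v)`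
of the complete graph on `d+1` vertices minus the matching `M`, and joining `v` to both
endpoints of every edge of `M`. -/
def tightGraph (d : ℕ) {VH : Type*} (H : SimpleGraph VH) (M : SimpleGraph (Fin (d + 1))) :
    SimpleGraph (VH ⊕ VH × Fin (d + 1)) :=
  SimpleGraph.fromRel fun x y =>
    match x, y with
    | Sum.inl u, Sum.inl v => H.Adj u v
    | Sum.inl u, Sum.inr (v, i) => u = v ∧ i ∈ M.support
    | Sum.inr (u, i), Sum.inr (v, j) => u = v ∧ i ≠ j ∧ ¬M.Adj i j
    | Sum.inr _, Sum.inl _ => False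

section Aux

variable {VH : Type*} {d : ℕ} {H : SimpleGraph VH} {M : SimpleGraph (Fin (d+1))}

lemma tg_adj_il_il (u v : VH) : (tightGraph d H M).Adj (.inl u) (.inl v) ↔ H.Adj u v := by
  simp only [tightGraph, SimpleGraph.fromRel_adj]
  constructor
  · rintro ⟨-, h | h⟩
    · exact h
    · exact h.symm
  · intro h
    exact ⟨by simpa using h.ne, Or.inl h⟩

lemma tg_adj_il_ir (u v : VH) (i : Fin (d+1)) :
    (tightGraph d H M).Adj (.inl u) (.inr (v, i)) ↔ u = v ∧ i ∈ M.support := by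
  simp only [tightGraph, SimpleGraph.fromRel_adj]
  simp

lemma tg_adj_ir_ir (u v : VH) (i j : Fin (d+1)) :
    (tightGraph d H M).Adj (.inr (u, i)) (.inr (v, j)) ↔ u = v ∧ i ≠ j ∧ ¬M.Adj i j := by
  simp only [tightGraph, SimpleGraph.fromRel_adj]
  constructor
  · rintro ⟨hne, ⟨rfl, hij, h⟩ | ⟨rfl, hij, h⟩⟩
    · exact ⟨rfl, hij, h⟩
    · exact ⟨rfl, hij.symm, fun h' => h h'.symm⟩
  · rintro ⟨rfl, hij, h⟩
    exact ⟨by simp [hij], Or.inl ⟨rfl, hij, h⟩⟩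

lemma matching_support_card {d₁ : ℕ} (heven : Even (d - d₁))
    (hM : ∀ a b c, M.Adj a b → M.Adj a c → b = c)
    (hMsize : M.edgeSet.ncard = (d - d₁) / 2) :
    d - d₁ ≤ M.support.ncard := by
  classical
  have hdegle : ∀ v : Fin (d+1), M.degree v ≤ 1 := by
    intro v
    rw [SimpleGraph.degree]
    apply Finset.card_le_one.mpr
    intro a ha b hb
    exact hM v a b (M.mem_neighborFinset .. |>.mp ha) (M.mem_neighborFinset .. |>.mp hb)
  have hdeg0 : ∀ v : Fin (d+1), v ∉ M.support → M.degree v = 0 := by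
    intro v hv
    rw [SimpleGraph.degree, Finset.card_eq_zero, Finset.eq_empty_iff_forall_notMem]
    intro a ha
    exact hv ⟨a, (M.mem_neighborFinset ..).mp ha⟩
  have hsum : ∑ v, M.degree v = 2 * M.edgeFinset.card :=
    M.sum_degrees_eq_twice_card_edges
  have hedge : M.edgeFinset.card = (d - d₁) / 2 := by
    rw [← hMsize, SimpleGraph.edgeFinset, Set.ncard_eq_toFinset_card']
  have h1 : ∑ v, M.degree v = ∑ v ∈ Finset.univ.filter (fun i => i ∈ M.support), M.degree v := by
    symm
    apply Finset.sum_subset (Finset.subset_univ _)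
    intro x _ hx
    exact hdeg0 x (by simpa using hx)
  have h2 : ∑ v ∈ Finset.univ.filter (fun i => i ∈ M.support), M.degree v ≤
      (Finset.univ.filter (fun i => i ∈ M.support)).card := by
    calc _ ≤ ∑ _v ∈ Finset.univ.filter (fun i => i ∈ M.support), 1 :=
          Finset.sum_le_sum fun i _ => hdegle i
      _ = _ := by simp
  have hn : M.support.ncard = (Finset.univ.filter (fun i => i ∈ M.support)).card := by
    rw [Set.ncard_eq_toFinset_card']
    congr 1
    ext i
    simp [Set.mem_toFinset]
  have h3 : 2 * ((d - d₁) / 2) = d - d₁ := Nat.two_mul_div_two_of_even heven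
  omega

end Aux

/-- If `H` satisfies the local expansion `e_H(U,Uᶜ) ≥ (1-ε)d₁|U|` for all `U` with
`|U| ≤ εd/3`, then the constructed graph `G` satisfies `e_G(U,Uᶜ) ≥ (1-ε)d|U|` for all
`U ⊆ V(G)` with `|U| ≤ εd/3`. -/
theorem stmt_16 {VH : Type*} [Fintype VH] [DecidableEq VH] (d d₁ : ℕ)
    (hd₁ : 0 < d₁) (hdd : d₁ < d) (heven : Even (d - d₁))
    (H : SimpleGraph VH) (hreg : ∀ u : VH, (H.neighborSet u).ncard = d₁)
    (M : SimpleGraph (Fin (d + 1))) (hM : ∀ a b c, M.Adj a b → M.Adj a c → b = c)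
    (hMsize : M.edgeSet.ncard = (d - d₁) / 2)
    (ε : ℝ) (hε0 : 0 < ε) (hε1 : ε < 1) (hεd : ε * d / 3 + 1 ≤ ε * d)
    (hHexp : ∀ U : Finset VH, (U.card : ℝ) ≤ ε * d / 3 →
      (1 - ε) * d₁ * U.card ≤ (edgeBoundary H (U : Set VH) : ℝ)) :
    ∀ U : Finset (VH ⊕ VH × Fin (d + 1)), (U.card : ℝ) ≤ ε * d / 3 →
      (1 - ε) * d * U.card ≤ (edgeBoundary (tightGraph d H M) (U : Set _) : ℝ) := by
  classical
  intro U hU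
  set G := tightGraph d H M with hG
  -- degree lower bound
  have hdeg : ∀ x : VH ⊕ VH × Fin (d + 1), d ≤ (Finset.univ.filter (fun w => G.Adj x w)).card := by
    intro x
    match x with
    | Sum.inl v =>
      set A1 : Finset (VH ⊕ VH × Fin (d + 1)) :=
        (Finset.univ.filter (fun u => H.Adj v u)).image Sum.inl with hA1
      set A2 : Finset (VH ⊕ VH × Fin (d + 1)) :=
        (Finset.univ.filter (fun i => i ∈ M.support)).image (fun i => Sum.inr (v, i)) with hA2
      have hsub : A1 ∪ A2 ⊆ Finset.univ.filter (fun w => G.Adj (Sum.inl v) w) := by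
        intro w hw
        rcases Finset.mem_union.mp hw with hw | hw
        · obtain ⟨u, hu, rfl⟩ := Finset.mem_image.mp hw
          simp only [Finset.mem_filter, Finset.mem_univ, true_and] at hu ⊢
          exact (tg_adj_il_il v u).mpr hu
        · obtain ⟨i, hi, rfl⟩ := Finset.mem_image.mp hw
          simp only [Finset.mem_filter, Finset.mem_univ, true_and] at hi ⊢
          exact (tg_adj_il_ir v v i).mpr ⟨rfl, hi⟩
      have hdisj : Disjoint A1 A2 := by
        rw [Finset.disjoint_left]
        rintro w hw1 hw2
        obtain ⟨u, _, rfl⟩ := Finset.mem_image.mp hw1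
        obtain ⟨i, _, h⟩ := Finset.mem_image.mp hw2
        exact absurd h (by simp)
      have hc1 : A1.card = d₁ := by
        rw [hA1, Finset.card_image_of_injective _ Sum.inl_injective]
        have := hreg v
        rw [Set.ncard_eq_toFinset_card'] at this
        rw [← this]
        congr 1
        ext u
        simp [SimpleGraph.neighborSet]
        exact Set.mem_toFinset.symm
      have hc2 : d - d₁ ≤ A2.card := by
        rw [hA2, Finset.card_image_of_injective _
          (fun i j h => congrArg Prod.snd (Sum.inr_injective h))]
        have := matching_support_card heven hM hMsize
        have hn : M.support.ncard = (Finset.univ.filter (fun i => i ∈ M.support)).card := by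
          rw [Set.ncard_eq_toFinset_card']
          congr 1
          ext i
          simp [Set.mem_toFinset]
        omega
      calc d = d₁ + (d - d₁) := by omega
        _ ≤ A1.card + A2.card := Nat.add_le_add hc1.ge hc2
        _ = (A1 ∪ A2).card := (Finset.card_union_of_disjoint hdisj).symm
        _ ≤ _ := Finset.card_le_card hsub
    | Sum.inr (v, i) =>
      by_cases hi : i ∈ M.support
      · obtain ⟨j, hj⟩ := hi
        have hij : i ≠ j := hj.ne
        set A : Finset (VH ⊕ VH × Fin (d + 1)) :=
          insert (Sum.inl v) ((((Finset.univ : Finset (Fin (d+1))).erase i).erase j).image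
            (fun k => Sum.inr (v, k))) with hA
        have hsub : A ⊆ Finset.univ.filter (fun w => G.Adj (Sum.inr (v, i)) w) := by
          intro w hw
          simp only [Finset.mem_filter, Finset.mem_univ, true_and]
          rcases Finset.mem_insert.mp hw with rfl | hw
          · exact ((tg_adj_il_ir v v i).mpr ⟨rfl, ⟨j, hj⟩⟩).symm
          · obtain ⟨k, hk, rfl⟩ := Finset.mem_image.mp hw
            rw [Finset.mem_erase, Finset.mem_erase] at hk
            refine (tg_adj_ir_ir v v i k).mpr ⟨rfl, fun h => hk.2.1 h.symm, fun h => ?_⟩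
            exact hk.1 (hM i k j h hj)
        have hcard : d ≤ A.card := by
          rw [hA, Finset.card_insert_of_notMem (by simp),
            Finset.card_image_of_injective _
              (fun a b h => congrArg Prod.snd (Sum.inr_injective h)),
            Finset.card_erase_of_mem (by simp [hij.symm]), Finset.card_erase_of_mem (by simp)]
          simp
          omega
        exact hcard.trans (Finset.card_le_card hsub)
      · set A : Finset (VH ⊕ VH × Fin (d + 1)) :=
          ((Finset.univ : Finset (Fin (d+1))).erase i).image (fun k => Sum.inr (v, k)) with hA
        have hsub : A ⊆ Finset.univ.filter (fun w => G.Adj (Sum.inr (v, i)) w) := by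
          intro w hw
          simp only [Finset.mem_filter, Finset.mem_univ, true_and]
          obtain ⟨k, hk, rfl⟩ := Finset.mem_image.mp (hA ▸ hw)
          rw [Finset.mem_erase] at hk
          exact (tg_adj_ir_ir v v i k).mpr ⟨rfl, fun h => hk.1 h.symm, fun h => hi ⟨k, h⟩⟩
        have hcard : d ≤ A.card := by
          rw [hA, Finset.card_image_of_injective _
              (fun a b h => congrArg Prod.snd (Sum.inr_injective h)),
            Finset.card_erase_of_mem (by simp)]
          simp
        exact hcard.trans (Finset.card_le_card hsub)
  -- edge boundary as a sum
  set T : Finset ((VH ⊕ VH × Fin (d + 1)) × (VH ⊕ VH × Fin (d + 1))) :=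
    Finset.univ.filter (fun p => p.1 ∈ U ∧ p.2 ∉ U ∧ G.Adj p.1 p.2) with hT
  have hEB : edgeBoundary G (U : Set (VH ⊕ VH × Fin (d + 1))) = T.card := by
    rw [edgeBoundary, show {p : (VH ⊕ VH × Fin (d + 1)) × (VH ⊕ VH × Fin (d + 1)) |
          p.1 ∈ (U : Set (VH ⊕ VH × Fin (d + 1))) ∧ p.2 ∉ (U : Set (VH ⊕ VH × Fin (d + 1)))
          ∧ G.Adj p.1 p.2}
        = (T : Set ((VH ⊕ VH × Fin (d + 1)) × (VH ⊕ VH × Fin (d + 1)))) by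
          ext p; simp [hT], Set.ncard_coe_finset]
  set B : (VH ⊕ VH × Fin (d + 1)) → Finset (VH ⊕ VH × Fin (d + 1)) := fun u =>
    (Finset.univ.filter (fun w => G.Adj u w)).filter (fun w => w ∉ U) with hB
  have hfib : T.card = ∑ u ∈ U, (B u).card := by
    rw [Finset.card_eq_sum_card_fiberwise (f := Prod.fst) (t := U)
      (fun p hp => (Finset.mem_filter.mp hp).2.1)]
    refine Finset.sum_congr rfl fun u hu => ?_
    refine Finset.card_bij' (fun p _ => p.2) (fun w _ => (u, w)) ?_ ?_ ?_ ?_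
    · intro p hp
      simp only [hT, hB, Finset.mem_filter, Finset.mem_univ, true_and] at hp ⊢
      obtain ⟨⟨h1, h2, h3⟩, h4⟩ := hp
      subst h4
      exact ⟨h3, h2⟩
    · intro w hw
      simp only [hT, hB, Finset.mem_filter, Finset.mem_univ, true_and] at hw ⊢
      exact ⟨⟨hu, hw.2, hw.1⟩, trivial⟩
    · intro p hp
      simp only [hT, Finset.mem_filter] at hp
      exact Prod.ext hp.2.symm rfl
    · intro w _
      rfl
  -- per-vertex bound
  have hvert : ∀ u ∈ U, d ≤ (U.card - 1) + (B u).card := by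
    intro u hu
    have hsplit := Finset.card_filter_add_card_filter_not
      (s := Finset.univ.filter (fun w => G.Adj u w)) (p := fun w => w ∉ U)
    have hsplit' : (B u).card + ((Finset.univ.filter (fun w => G.Adj u w)).filter
        (fun w => ¬ w ∉ U)).card = (Finset.univ.filter (fun w => G.Adj u w)).card := hsplit
    have hin : ((Finset.univ.filter (fun w => G.Adj u w)).filter
        (fun w => ¬ w ∉ U)).card ≤ U.card - 1 := by
      have hss : ((Finset.univ.filter (fun w => G.Adj u w)).filter (fun w => ¬ w ∉ U))
          ⊆ U.erase u := by
        intro w hw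
        simp only [Finset.mem_filter, Finset.mem_univ, true_and, not_not] at hw
        exact Finset.mem_erase.mpr ⟨hw.1.ne', hw.2⟩
      calc _ ≤ (U.erase u).card := Finset.card_le_card hss
        _ = U.card - 1 := Finset.card_erase_of_mem hu
    have := hdeg u
    omega
  -- total count
  have htot : U.card * d ≤ U.card * (U.card - 1) + T.card := by
    rw [hfib]
    calc U.card * d = ∑ _u ∈ U, d := by rw [Finset.sum_const, smul_eq_mul]
      _ ≤ ∑ u ∈ U, ((U.card - 1) + (B u).card) := Finset.sum_le_sum hvert
      _ = U.card * (U.card - 1) + ∑ u ∈ U, (B u).card := by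
          rw [Finset.sum_add_distrib, Finset.sum_const, smul_eq_mul]
  -- finish with real arithmetic
  rw [hEB]
  rcases Nat.eq_zero_or_pos U.card with h0 | h0
  · rw [h0]
    push_cast
    nlinarith [Nat.cast_nonneg (α := ℝ) T.card]
  · have hc1 : (1 : ℝ) ≤ (U.card : ℝ) := by exact_mod_cast h0
    have hcast : ((U.card * (U.card - 1) + T.card : ℕ) : ℝ)
        = (U.card : ℝ) * ((U.card : ℝ) - 1) + (T.card : ℝ) := by
      push_cast [Nat.cast_sub h0]
      ring
    have htotR : (U.card : ℝ) * d ≤ (U.card : ℝ) * ((U.card : ℝ) - 1) + (T.card : ℝ) := by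
      rw [← hcast]
      exact_mod_cast htot
    nlinarith [hU, hεd, hε0.le, hc1, Nat.cast_nonneg (α := ℝ) d]
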